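/- For all natural numbers m and real numbers φ ≠ 0, (φ^(2m+1) + φ^(-(2m+1)))/(φ + φ^(-1)) = T_m(φ - φ^(-1)), where T_m(y) = Σ_{k=0}^{m} C(m+k, m-k) y^(2k). -/

import Mathlib

open Finset

private def Asum (m : ℕ) (y : ℝ) : ℝ :=
  ∑ k ∈ range (m + 1), ((m + k).choose (2 * k) : ℝ) * y ^ (2 * k)

private def Bsum (m : ℕ) (y : ℝ) : ℝ :=
  ∑ k ∈ range (m + 1), ((m + k).choose (2 * k + 1) : ℝ) * y ^ (2 * k)

private lemma recB (m : ℕ) (y : ℝ) : Bsum (m + 1) y = Asum m y + Bsum m y := by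
  unfold Asum Bsum
  rw [Finset.sum_range_succ]
  have h0 : ((m + 1 + (m + 1)).choose (2 * (m + 1) + 1) : ℝ) = 0 := by
    norm_cast
    exact Nat.choose_eq_zero_of_lt (by omega)
  rw [h0, zero_mul, add_zero, ← Finset.sum_add_distrib]
  refine Finset.sum_congr rfl fun k _ => ?_
  have h : m + 1 + k = (m + k) + 1 := by ring
  rw [h, Nat.choose_succ_succ]
  push_cast
  ring

private lemma recA (m : ℕ) (y : ℝ) :
    Asum (m + 1) y = Asum m y + y ^ 2 * Bsum (m + 1) y := by
  unfold Asum Bsum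
  rw [Finset.mul_sum]
  have hR2 : ∀ k ∈ range (m + 2),
      y ^ 2 * (((m + 1 + k).choose (2 * k + 1) : ℝ) * y ^ (2 * k)) =
      ((m + 1 + k).choose (2 * k + 1) : ℝ) * y ^ (2 * k + 2) := by
    intro k _; ring
  rw [Finset.sum_congr rfl hR2]
  -- peel top term of the B-sum, which vanishes
  rw [Finset.sum_range_succ (f := fun k => ((m + 1 + k).choose (2 * k + 1) : ℝ) * y ^ (2 * k + 2))]
  have h0 : ((m + 1 + (m + 1)).choose (2 * (m + 1) + 1) : ℝ) = 0 := by
    norm_cast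
    exact Nat.choose_eq_zero_of_lt (by omega)
  rw [h0, zero_mul, add_zero]
  -- peel bottom terms of the A-sums
  rw [Finset.sum_range_succ' (f := fun k => ((m + 1 + k).choose (2 * k) : ℝ) * y ^ (2 * k))]
  rw [Finset.sum_range_succ' (f := fun k => ((m + k).choose (2 * k) : ℝ) * y ^ (2 * k))]
  -- extend the middle sum (range m) to range (m+1) with a zero top term
  have hext : (∑ k ∈ range (m + 1), ((m + (k + 1)).choose (2 * (k + 1)) : ℝ) * y ^ (2 * (k + 1)))
      = ∑ k ∈ range m, ((m + (k + 1)).choose (2 * (k + 1)) : ℝ) * y ^ (2 * (k + 1)) := by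
    rw [Finset.sum_range_succ]
    have : ((m + (m + 1)).choose (2 * (m + 1)) : ℝ) = 0 := by
      norm_cast
      exact Nat.choose_eq_zero_of_lt (by omega)
    rw [this, zero_mul, add_zero]
  rw [← hext]
  simp only [Nat.choose_zero_right, Nat.add_zero, Nat.mul_zero, pow_zero]
  have : (∑ k ∈ range (m + 1), ((m + 1 + (k + 1)).choose (2 * (k + 1)) : ℝ) * y ^ (2 * (k + 1)))
      = ∑ k ∈ range (m + 1), (((m + (k + 1)).choose (2 * (k + 1)) : ℝ) * y ^ (2 * (k + 1)) +
          ((m + 1 + k).choose (2 * k + 1) : ℝ) * y ^ (2 * k + 2)) := by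
    refine Finset.sum_congr rfl fun k _ => ?_
    have h1 : m + 1 + (k + 1) = (m + (k + 1)) + 1 := by ring
    have h2 : 2 * (k + 1) = (2 * k + 1) + 1 := by ring
    rw [h1, h2, Nat.choose_succ_succ]
    have h3 : m + (k + 1) = m + 1 + k := by ring
    rw [h3]
    push_cast
    ring
  rw [this, Finset.sum_add_distrib]
  ring

private lemma key (m : ℕ) (φ : ℝ) (hφ : 0 < φ) :
    φ ^ (2 * m + 1) + φ⁻¹ ^ (2 * m + 1) = (φ + φ⁻¹) * Asum m (φ - φ⁻¹) ∧
    φ ^ (2 * m) - φ⁻¹ ^ (2 * m) = (φ + φ⁻¹) * ((φ - φ⁻¹) * Bsum m (φ - φ⁻¹)) := by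
  have hab : φ * φ⁻¹ = 1 := mul_inv_cancel₀ (ne_of_gt hφ)
  induction m with
  | zero =>
    constructor
    · simp [Asum]
    · simp [Bsum]
  | succ m ih =>
    obtain ⟨ih1, ih2⟩ := ih
    have hQ : φ ^ (2 * (m + 1)) - φ⁻¹ ^ (2 * (m + 1)) =
        (φ + φ⁻¹) * ((φ - φ⁻¹) * Bsum (m + 1) (φ - φ⁻¹)) := by
      rw [recB]
      have hexp1 : 2 * (m + 1) = (2 * m + 1) + 1 := by ring
      rw [hexp1]
      linear_combination (φ - φ⁻¹) * ih1 + ih2 +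
        (φ ^ (2 * m) - φ⁻¹ ^ (2 * m)) * hab
    refine ⟨?_, hQ⟩
    rw [recA]
    have hexp2 : 2 * (m + 1) + 1 = (2 * (m + 1)) + 1 := by ring
    linear_combination (φ - φ⁻¹) * hQ + ih1 +
      (φ ^ (2 * m + 1) + φ⁻¹ ^ (2 * m + 1)) * hab
  -- done

theorem quartic_T_identity (m : ℕ) (φ : ℝ) (hφ : 0 < φ) :
    (φ ^ (2 * m + 1) + (φ⁻¹) ^ (2 * m + 1)) / (φ + φ⁻¹) =
      ∑ k ∈ range (m + 1), (Nat.choose (m + k) (m - k) : ℝ) * (φ - φ⁻¹) ^ (2 * k) := by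
  have hc : (0 : ℝ) < φ + φ⁻¹ := by positivity
  rw [div_eq_iff (ne_of_gt hc)]
  have hsum : (∑ k ∈ range (m + 1), (Nat.choose (m + k) (m - k) : ℝ) * (φ - φ⁻¹) ^ (2 * k))
      = Asum m (φ - φ⁻¹) := by
    unfold Asum
    refine Finset.sum_congr rfl fun k hk => ?_
    have hk' : k ≤ m := by
      have := Finset.mem_range.mp hk; omega
    have h1 : m - k = (m + k) - 2 * k := by omega
    rw [h1, Nat.choose_symm (by omega)]
  rw [hsum]
  exact ((key m φ hφ).1).trans (mul_comm _ _)
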